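/- Any positive-definite real symmetric N×N matrix S can be written as a finite sum S = Σ_k λ_k S_k where each S_k is a positive-definite symmetric matrix with rational entries and the λ_k are positive real numbers that are linearly independent over ℚ. -/

import Mathlib

open Matrix


open Matrix Submodule Set in
lemma exists_basis_with_one {N : ℕ} (S : Matrix (Fin N) (Fin N) ℝ) :
    ∃ (m : ℕ) (μ : Fin (m+1) → ℝ), μ 0 = 1 ∧ LinearIndependent ℚ μ ∧
      ∀ a b : Fin N, ∃ q : Fin (m+1) → ℚ, S a b = ∑ i, (q i : ℝ) * μ i := by
  set V : Submodule ℚ ℝ :=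
    Submodule.span ℚ (insert (1:ℝ) (Set.range fun p : Fin N × Fin N => S p.1 p.2)) with hV
  haveI : FiniteDimensional ℚ V :=
    FiniteDimensional.span_of_finite ℚ ((Set.finite_range _).insert 1)
  have h1mem : (1:ℝ) ∈ V := subset_span (mem_insert _ _)
  set one : V := ⟨1, h1mem⟩ with hone
  have hone0 : one ≠ 0 := by
    intro h
    have := congrArg (Subtype.val) h
    simp [hone] at this
  have hli : LinearIndepOn ℚ id ({one} : Set V) :=
    LinearIndepOn.singleton hone0
  let b : Module.Basis _ ℚ V := Module.Basis.extend hli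
  haveI : Fintype (hli.extend (Set.subset_univ _)) := FiniteDimensional.fintypeBasisIndex b
  have honeT : one ∈ hli.extend (Set.subset_univ _) := hli.subset_extend _ rfl
  have hcard : 0 < Fintype.card (hli.extend (Set.subset_univ _)) :=
    Fintype.card_pos_iff.mpr ⟨⟨one, honeT⟩⟩
  obtain ⟨m, hm⟩ : ∃ m, Fintype.card (hli.extend (Set.subset_univ _)) = m + 1 :=
    ⟨_, (Nat.succ_pred_eq_of_pos hcard).symm⟩
  let e0 : Fin (m+1) ≃ (hli.extend (Set.subset_univ _)) := (Fintype.equivFinOfCardEq hm).symm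
  let e : Fin (m+1) ≃ (hli.extend (Set.subset_univ _)) :=
    (Equiv.swap 0 (e0.symm ⟨one, honeT⟩)).trans e0
  have he0 : e 0 = ⟨one, honeT⟩ := by simp [e]
  refine ⟨m, fun i => (b (e i) : ℝ), ?_, ?_, ?_⟩
  · show ((b (e 0) : V) : ℝ) = 1
    rw [he0]
    simp [b, Module.Basis.extend_apply_self, hone]
  · have h1 : LinearIndependent ℚ (fun i : Fin (m+1) => b (e i)) :=
      b.linearIndependent.comp e e.injective
    have h2 := h1.map' V.subtype (Submodule.ker_subtype V)
    exact h2
  · intro a b'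
    have hmem : S a b' ∈ V := subset_span (mem_insert_of_mem _ ⟨(a, b'), rfl⟩)
    refine ⟨fun i => b.repr ⟨S a b', hmem⟩ (e i), ?_⟩
    have := b.sum_repr ⟨S a b', hmem⟩
    rw [← Equiv.sum_comp e (fun j => b.repr ⟨S a b', hmem⟩ j • b j)] at this
    have h4 : ((∑ i : Fin (m+1), b.repr ⟨S a b', hmem⟩ (e i) • b (e i) : V) : ℝ) = S a b' :=
      congrArg Subtype.val this
    refine (h4.symm).trans ?_
    simp [Rat.smul_def]

lemma quad_abs_bound {N : ℕ} (E : Matrix (Fin N) (Fin N) ℝ) (x : Fin N → ℝ) :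
    |x ⬝ᵥ E *ᵥ x| ≤ (∑ a, ∑ b, |E a b|) * ∑ a, x a ^ 2 := by
  have hx2 : ∀ a b : Fin N, |x a| * |x b| ≤ ∑ c, x c ^ 2 := by
    intro a b
    have h1 : x a ^ 2 ≤ ∑ c, x c ^ 2 :=
      Finset.single_le_sum (fun c _ => sq_nonneg (x c)) (Finset.mem_univ a)
    have h2 : x b ^ 2 ≤ ∑ c, x c ^ 2 :=
      Finset.single_le_sum (fun c _ => sq_nonneg (x c)) (Finset.mem_univ b)
    nlinarith [abs_nonneg (x a), abs_nonneg (x b), sq_abs (x a), sq_abs (x b)]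
  have key : |x ⬝ᵥ E *ᵥ x| ≤ ∑ a, ∑ b, |E a b| * (|x a| * |x b|) := by
    have : x ⬝ᵥ E *ᵥ x = ∑ a, ∑ b, x a * (E a b * x b) := by
      simp [dotProduct, mulVec, Finset.mul_sum]
    rw [this]
    refine (Finset.abs_sum_le_sum_abs _ _).trans ?_
    refine Finset.sum_le_sum fun a _ => ?_
    refine (Finset.abs_sum_le_sum_abs _ _).trans ?_
    refine Finset.sum_le_sum fun b _ => ?_
    rw [abs_mul, abs_mul]
    ring_nf
    nlinarith [abs_nonneg (x a), abs_nonneg (x b), abs_nonneg (E a b)]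
  refine key.trans ?_
  rw [Finset.sum_mul]
  refine Finset.sum_le_sum fun a _ => ?_
  rw [Finset.sum_mul]
  refine Finset.sum_le_sum fun b _ => ?_
  exact mul_le_mul_of_nonneg_left (hx2 a b) (abs_nonneg _)

lemma quad_smul {N : ℕ} (r : ℝ) (M : Matrix (Fin N) (Fin N) ℝ) (x : Fin N → ℝ) :
    x ⬝ᵥ (r • M) *ᵥ x = r * (x ⬝ᵥ M *ᵥ x) := by
  simp [dotProduct, mulVec, Finset.mul_sum, Finset.sum_mul]
  congr 1; ext a; congr 1; ext b; ring

lemma quad_add {N : ℕ} (M M' : Matrix (Fin N) (Fin N) ℝ) (x : Fin N → ℝ) :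
    x ⬝ᵥ (M + M') *ᵥ x = x ⬝ᵥ M *ᵥ x + x ⬝ᵥ M' *ᵥ x := by
  rw [Matrix.add_mulVec, dotProduct_add]

lemma quad_sum {N k : ℕ} (M : Fin k → Matrix (Fin N) (Fin N) ℝ) (x : Fin N → ℝ) :
    x ⬝ᵥ (∑ i, M i) *ᵥ x = ∑ i, x ⬝ᵥ (M i) *ᵥ x := by
  induction k with
  | zero => simp [dotProduct]
  | succ n ih =>
      rw [Fin.sum_univ_succ, Fin.sum_univ_succ, quad_add, ih]

lemma posDef_of_symm_quad {N : ℕ} {M : Matrix (Fin N) (Fin N) ℝ} (hs : M.IsSymm)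
    (h : ∀ x : Fin N → ℝ, x ≠ 0 → 0 < x ⬝ᵥ M *ᵥ x) : M.PosDef := by
  refine Matrix.PosDef.of_dotProduct_mulVec_pos ?_ ?_
  · rwa [Matrix.IsHermitian, Matrix.conjTranspose, Matrix.IsSymm] at *
  · intro x hx
    simpa using h x hx

lemma sum_sq_pos_of_ne_zero {N : ℕ} {x : Fin N → ℝ} (hx : x ≠ 0) :
    0 < ∑ a, x a ^ 2 := by
  obtain ⟨a, ha⟩ := Function.ne_iff.mp hx
  exact Finset.sum_pos' (fun c _ => sq_nonneg _) ⟨a, Finset.mem_univ a, by nlinarith [abs_pos.mpr ha, sq_abs (x a)]⟩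

lemma posDef_exists_gamma {N : ℕ} {S : Matrix (Fin N) (Fin N) ℝ} (hS : S.PosDef) :
    ∃ γ : ℝ, 0 < γ ∧ ∀ x : Fin N → ℝ, γ * ∑ a, x a ^ 2 ≤ x ⬝ᵥ S *ᵥ x := by
  have hq : ∀ x : Fin N → ℝ, x ≠ 0 → 0 < x ⬝ᵥ S *ᵥ x := by
    intro x hx; simpa using hS.dotProduct_mulVec_pos hx
  rcases Nat.eq_zero_or_pos N with hN | hN
  · subst hN
    exact ⟨1, one_pos, fun x => by simp [dotProduct]⟩
  haveI : Nonempty (Fin N) := ⟨⟨0, hN⟩⟩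
  set f : (Fin N → ℝ) → ℝ := fun x => x ⬝ᵥ S *ᵥ x with hf
  have hfc : Continuous f := by
    have : f = fun x => ∑ a, x a * ∑ b, S a b * x b := by
      funext x; simp [hf, dotProduct, mulVec]
    rw [this]
    exact continuous_finset_sum _ fun a _ => (continuous_apply a).mul
      (continuous_finset_sum _ fun b _ => continuous_const.mul (continuous_apply b))
  have hsph : (Metric.sphere (0 : Fin N → ℝ) 1).Nonempty := by
    refine ⟨fun _ => 1, ?_⟩
    simp [pi_norm_const]
  obtain ⟨u, hu, humin⟩ := (isCompact_sphere (0 : Fin N → ℝ) 1).exists_isMinOn hsph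
    hfc.continuousOn
  have hunorm : ‖u‖ = 1 := mem_sphere_zero_iff_norm.mp hu
  have hune : u ≠ 0 := fun h => by simp [h] at hunorm
  have hγ0 : 0 < f u := hq u hune
  refine ⟨f u / N, div_pos hγ0 (by exact_mod_cast hN), fun x => ?_⟩
  rcases eq_or_ne x 0 with rfl | hx
  · simp
  · have hnx : 0 < ‖x‖ := norm_pos_iff.mpr hx
    have hmem : ‖x‖⁻¹ • x ∈ Metric.sphere (0 : Fin N → ℝ) 1 := by
      simp [norm_smul, abs_of_pos (inv_pos.mpr hnx)]
      field_simp
    have hfu : f u ≤ f (‖x‖⁻¹ • x) := humin hmem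
    have hscale : f (‖x‖⁻¹ • x) = ‖x‖⁻¹ * ‖x‖⁻¹ * f x := by
      simp [hf, smul_dotProduct, Matrix.mulVec_smul, dotProduct_smul, smul_eq_mul]
      ring
    have hsum : ∑ a, x a ^ 2 ≤ N * ‖x‖ ^ 2 := by
      have : ∀ a : Fin N, x a ^ 2 ≤ ‖x‖ ^ 2 := by
        intro a
        have h1 : |x a| ≤ ‖x‖ := by
          simpa [Real.norm_eq_abs] using norm_le_pi_norm x a
        nlinarith [abs_nonneg (x a), sq_abs (x a)]
      calc ∑ a, x a ^ 2 ≤ ∑ _a : Fin N, ‖x‖ ^ 2 := Finset.sum_le_sum fun a _ => this a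
        _ = N * ‖x‖ ^ 2 := by simp [Finset.sum_const, mul_comm]
    have hfx : f u * ‖x‖ ^ 2 ≤ f x := by
      rw [hscale] at hfu
      have h2 : f u * ‖x‖ ^ 2 ≤ (‖x‖⁻¹ * ‖x‖⁻¹ * f x) * ‖x‖ ^ 2 := by
        nlinarith [sq_nonneg ‖x‖]
      calc f u * ‖x‖ ^ 2 ≤ (‖x‖⁻¹ * ‖x‖⁻¹ * f x) * ‖x‖ ^ 2 := h2
        _ = f x := by field_simp
    calc f u / N * ∑ a, x a ^ 2 ≤ f u / N * (N * ‖x‖ ^ 2) := by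
          apply mul_le_mul_of_nonneg_left hsum (le_of_lt (div_pos hγ0 (by exact_mod_cast hN)))
      _ = f u * ‖x‖ ^ 2 := by
          field_simp
      _ ≤ f x := hfx

/-- Any positive-definite real symmetric matrix is a finite positive linear combination
`S = Σ λ_k • S_k` of positive-definite symmetric matrices with rational entries, where the
positive real coefficients `λ_k` are linearly independent over `ℚ`. -/
theorem posDef_decomposition_rational {N : ℕ}
    (S : Matrix (Fin N) (Fin N) ℝ) (hSsymm : S.IsSymm) (hS : S.PosDef) :
    ∃ (k : ℕ) (lam : Fin k → ℝ) (T : Fin k → Matrix (Fin N) (Fin N) ℝ),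
      (∀ i, 0 < lam i) ∧ LinearIndependent ℚ lam ∧
      (∀ i, (T i).IsSymm ∧ (T i).PosDef ∧ ∀ a b, ∃ q : ℚ, T i a b = (q : ℝ)) ∧
      S = ∑ i, lam i • T i := by
  classical
  obtain ⟨m, μ, hμ0, hμli, hμrep⟩ := exists_basis_with_one S
  choose q hq using hμrep
  set F : Fin (m+1) → Matrix (Fin N) (Fin N) ℝ :=
    fun i => Matrix.of (fun a b => (q a b i : ℝ)) with hFdef
  have hFapp : ∀ i a b, F i a b = (q a b i : ℝ) := fun i a b => rfl
  -- uniqueness of coordinates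
  have huniq : ∀ g g' : Fin (m+1) → ℚ,
      (∑ i, (g i : ℝ) * μ i) = (∑ i, (g' i : ℝ) * μ i) → g = g' := by
    intro g g' h
    have hz : ∑ i, (g - g') i • μ i = 0 := by
      simp only [Pi.sub_apply, sub_smul, Rat.smul_def, Finset.sum_sub_distrib, h, sub_self]
    funext i
    have := Fintype.linearIndependent_iff.mp hμli (g - g') hz i
    exact sub_eq_zero.mp this
  -- symmetry of coordinate matrices
  have hqsymm : ∀ a b, q a b = q b a := by
    intro a b
    exact huniq _ _ (by rw [← hq a b, ← hq b a, hSsymm.apply b a])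
  have hFsymm : ∀ i, (F i).IsSymm := by
    intro i
    refine Matrix.IsSymm.ext fun a b => ?_
    rw [hFapp, hFapp, hqsymm a b]
  -- constants
  obtain ⟨γ, hγpos, hγ⟩ := posDef_exists_gamma hS
  set C : ℝ := (∑ i, ∑ a, ∑ b, |F i a b|) + 1 with hCdef
  have hsumnn : ∀ i : Fin (m+1), (0:ℝ) ≤ ∑ a, ∑ b, |F i a b| := by
    intro i; positivity
  have hC1 : (1:ℝ) ≤ C := by
    have : (0:ℝ) ≤ ∑ i : Fin (m+1), ∑ a, ∑ b, |F i a b| :=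
      Finset.sum_nonneg fun i _ => hsumnn i
    simp only [hCdef]; linarith
  have hCpos : (0:ℝ) < C := lt_of_lt_of_le one_pos hC1
  have hCi : ∀ i, (∑ a, ∑ b, |F i a b|) ≤ C := by
    intro i
    have := Finset.single_le_sum (f := fun i => ∑ a, ∑ b, |F i a b|)
      (fun j _ => hsumnn j) (Finset.mem_univ i)
    simp only [hCdef]; linarith
  have hFb : ∀ i (x : Fin N → ℝ), |x ⬝ᵥ F i *ᵥ x| ≤ C * ∑ a, x a ^ 2 := by
    intro i x
    refine (quad_abs_bound (F i) x).trans ?_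
    exact mul_le_mul_of_nonneg_right (hCi i) (by positivity)
  obtain ⟨c, hc⟩ := exists_nat_gt ((2*C)/γ)
  have hcγ : 2*C < (c:ℝ) * γ := by
    rw [div_lt_iff₀ hγpos] at hc; linarith
  have hcpos : (0:ℝ) < c := by
    have h2C : (0:ℝ) < 2*C/γ := by positivity
    exact lt_trans h2C hc
  set δ : ℝ := min (γ/(2*C*(m+1))) (1/(2*(c:ℝ)*(m+1))) with hδdef
  have hδpos : 0 < δ := by
    apply lt_min <;> positivity
  have hδ1 : δ ≤ γ/(2*C*(m+1)) := min_le_left _ _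
  have hδ2 : δ ≤ 1/(2*(c:ℝ)*(m+1)) := min_le_right _ _
  -- rational approximations
  have hex : ∀ k : Fin m, ∃ r : ℚ, |μ k.succ - (r:ℝ)| < δ := fun k => exists_rat_near _ hδpos
  choose qr hqr using hex
  set ν : Fin m → ℝ := fun k => μ k.succ - (qr k : ℝ) with hνdef
  have hνδ : ∀ k, |ν k| < δ := hqr
  have hν0 : ∀ k, ν k ≠ 0 := by
    intro k hk
    have h1 : μ k.succ = (qr k : ℝ) := by
      have := sub_eq_zero.mp hk; exact this
    set g : Fin (m+1) → ℚ := fun i => if i = 0 then qr k else if i = k.succ then -1 else 0 with hgdef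
    have hsum : ∑ i, g i • μ i = 0 := by
      rw [Fintype.sum_eq_add 0 k.succ (Fin.succ_ne_zero k).symm
        (fun c' ⟨hc1, hc2⟩ => by simp [hgdef, hc1, hc2])]
      simp [hgdef, Fin.succ_ne_zero k, hμ0, Rat.smul_def, h1]
    have := Fintype.linearIndependent_iff.mp hμli g hsum k.succ
    simp [hgdef, Fin.succ_ne_zero k] at this
  set ε : Fin m → ℚ := fun k => if 0 < ν k then 1 else -1 with hεdef
  have hεabs : ∀ k, |ν k| = (ε k : ℝ) * ν k := by
    intro k
    by_cases h : 0 < ν k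
    · simp [hεdef, h, abs_of_pos h]
    · have hlt : ν k < 0 := lt_of_le_of_ne (not_lt.mp h) (hν0 k)
      simp [hεdef, h, abs_of_neg hlt]
  have hε2 : ∀ k, (ε k : ℝ) * (ε k : ℝ) = 1 := by
    intro k; by_cases h : 0 < ν k <;> simp [hεdef, h]
  have hεne : ∀ k, ε k ≠ 0 := by
    intro k; by_cases h : 0 < ν k <;> simp [hεdef, h]
  -- the rational matrix A
  set A : Matrix (Fin N) (Fin N) ℝ := F 0 + ∑ k : Fin m, (qr k : ℝ) • F k.succ with hAdef
  have hAapp : ∀ a b, A a b = (q a b 0 : ℝ) + ∑ k : Fin m, (qr k : ℝ) * (q a b k.succ : ℝ) := by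
    intro a b
    simp [hAdef, Matrix.sum_apply, hFapp]
  have hArat : ∀ a b, A a b = ((q a b 0 + ∑ k : Fin m, qr k * q a b k.succ : ℚ) : ℝ) := by
    intro a b; rw [hAapp]; push_cast; ring
  have hAsymm : A.IsSymm := by
    refine Matrix.IsSymm.ext fun a b => ?_
    rw [hAapp, hAapp, hqsymm a b]
  -- key identity
  have hkey : S = A + ∑ k : Fin m, ν k • F k.succ := by
    ext a b
    rw [Matrix.add_apply, Matrix.sum_apply, hq a b, Fin.sum_univ_succ, hμ0, hAapp]
    simp only [Matrix.smul_apply, smul_eq_mul, hFapp]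
    rw [add_assoc, ← Finset.sum_add_distrib]
    rw [mul_one]
    congr 1
    refine Finset.sum_congr rfl fun k _ => ?_
    simp only [hνdef]
    ring
  -- quadratic form of A
  have hquadA : ∀ x : Fin N → ℝ,
      x ⬝ᵥ A *ᵥ x = x ⬝ᵥ S *ᵥ x - ∑ k : Fin m, ν k * (x ⬝ᵥ F k.succ *ᵥ x) := by
    intro x
    have h1 : x ⬝ᵥ S *ᵥ x = x ⬝ᵥ A *ᵥ x + ∑ k : Fin m, ν k * (x ⬝ᵥ F k.succ *ᵥ x) := by
      rw [hkey, quad_add, quad_sum]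
      congr 1
      exact Finset.sum_congr rfl fun k _ => quad_smul _ _ _
    linarith [h1]
  have hSq0 : ∀ x : Fin N → ℝ, (0:ℝ) ≤ ∑ a, x a ^ 2 := fun x => by positivity
  have herr : ∀ x : Fin N → ℝ,
      |∑ k : Fin m, ν k * (x ⬝ᵥ F k.succ *ᵥ x)| ≤ (m:ℝ) * δ * (C * ∑ a, x a ^ 2) := by
    intro x
    refine (Finset.abs_sum_le_sum_abs _ _).trans ?_
    have h1 : ∀ k : Fin m, |ν k * (x ⬝ᵥ F k.succ *ᵥ x)| ≤ δ * (C * ∑ a, x a ^ 2) := by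
      intro k
      rw [abs_mul]
      exact mul_le_mul (le_of_lt (hνδ k)) (hFb _ x) (abs_nonneg _) (le_of_lt hδpos)
    calc ∑ k : Fin m, |ν k * (x ⬝ᵥ F k.succ *ᵥ x)|
        ≤ ∑ _k : Fin m, δ * (C * ∑ a, x a ^ 2) := Finset.sum_le_sum fun k _ => h1 k
      _ = (m:ℝ) * δ * (C * ∑ a, x a ^ 2) := by
          rw [Finset.sum_const, Finset.card_univ, Fintype.card_fin, nsmul_eq_mul]; ring
  have hmδC : (m:ℝ) * δ * C ≤ γ/2 := by
    have h1 : δ * (2*C*(m+1)) ≤ γ := by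
      rw [← le_div_iff₀ (by positivity)]
      exact hδ1
    have hm0 : (0:ℝ) ≤ m := Nat.cast_nonneg m
    nlinarith [mul_nonneg (le_of_lt hδpos) (le_of_lt hCpos)]
  have hεabs1 : ∀ k, |(ε k:ℝ)| = 1 := by
    intro k; by_cases h' : 0 < ν k <;> simp [hεdef, h']
  clear_value F C δ ν ε A
  have hAquad : ∀ x : Fin N → ℝ, (γ/2) * ∑ a, x a ^ 2 ≤ x ⬝ᵥ A *ᵥ x := by
    intro x
    have h1 := hγ x
    have h2 := herr x
    have h3 := hquadA x
    have h4 : ∑ k : Fin m, ν k * (x ⬝ᵥ F k.succ *ᵥ x) ≤ (m:ℝ) * δ * (C * ∑ a, x a ^ 2) :=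
      le_trans (le_abs_self _) h2
    have h5 : (m:ℝ) * δ * C * (∑ a, x a ^ 2) ≤ γ/2 * (∑ a, x a ^ 2) :=
      mul_le_mul_of_nonneg_right hmδC (hSq0 x)
    linarith
  have hApos : A.PosDef := by
    refine posDef_of_symm_quad hAsymm fun x hx => ?_
    have := hAquad x
    have hpos := sum_sq_pos_of_ne_zero hx
    nlinarith
  -- abbreviations for the final family
  set lam : Fin (m+1) → ℝ :=
    fun i => Fin.cases (1 - (c:ℝ) * ∑ k : Fin m, |ν k|) (fun k => |ν k|) i with hlamdef
  set T : Fin (m+1) → Matrix (Fin N) (Fin N) ℝ :=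
    fun i => Fin.cases A (fun k => (c:ℝ) • A + (ε k : ℝ) • F k.succ) i with hTdef
  have hlam0 : lam 0 = 1 - (c:ℝ) * ∑ k : Fin m, |ν k| := rfl
  have hlams : ∀ k : Fin m, lam k.succ = |ν k| := fun k => by simp [hlamdef]
  have hT0 : T 0 = A := rfl
  have hTs : ∀ k : Fin m, T k.succ = (c:ℝ) • A + (ε k : ℝ) • F k.succ := fun k => by
    simp [hTdef]
  have hSnu : ∑ k : Fin m, |ν k| ≤ (m:ℝ) * δ := by
    calc ∑ k : Fin m, |ν k| ≤ ∑ _k : Fin m, δ := Finset.sum_le_sum fun k _ => le_of_lt (hνδ k)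
      _ = (m:ℝ) * δ := by
          rw [Finset.sum_const, Finset.card_univ, Fintype.card_fin, nsmul_eq_mul]
  have hlam0pos : 0 < lam 0 := by
    rw [hlam0]
    have h1 : δ * (2*(c:ℝ)*(m+1)) ≤ 1 := by
      rw [← le_div_iff₀ (by positivity)]
      exact hδ2
    have h2 : (c:ℝ) * ∑ k : Fin m, |ν k| ≤ (c:ℝ) * ((m:ℝ) * δ) :=
      mul_le_mul_of_nonneg_left hSnu (le_of_lt hcpos)
    have hm0 : (0:ℝ) ≤ m := Nat.cast_nonneg m
    nlinarith [mul_nonneg (le_of_lt hcpos) (le_of_lt hδpos)]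
  refine ⟨m+1, lam, T, ?_, ?_, ?_, ?_⟩
  · -- positivity of lam
    intro i
    refine Fin.cases ?_ ?_ i
    · exact hlam0pos
    · intro k; rw [hlams k]; exact abs_pos.mpr (hν0 k)
  · -- linear independence
    rw [Fintype.linearIndependent_iff]
    intro g hg
    have hg' : (g 0:ℝ) * (1 - (c:ℝ)*∑ k : Fin m, |ν k|) + ∑ k : Fin m, (g k.succ:ℝ) * |ν k| = 0 := by
      rw [Fin.sum_univ_succ] at hg
      simpa [hlam0, hlams, Rat.smul_def] using hg
    set h : Fin (m+1) → ℚ := fun i => Fin.cases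
      (g 0 * (1 + (c:ℚ) * ∑ k : Fin m, ε k * qr k) - ∑ k : Fin m, g k.succ * ε k * qr k)
      (fun k => ε k * (g k.succ - g 0 * c)) i with hhdef
    have habs : ∀ k : Fin m, (ε k : ℝ) * μ k.succ = |ν k| + (ε k:ℝ) * (qr k:ℝ) := by
      intro k
      rw [hεabs k]
      simp only [hνdef]
      ring
    have hsum : ∑ i, h i • μ i = 0 := by
      have e1 : ∑ k : Fin m, ((ε k:ℝ) * ((g k.succ:ℝ) - (g 0:ℝ)*(c:ℝ))) * μ k.succ
          = (∑ k : Fin m, (g k.succ:ℝ) * |ν k|) - (g 0:ℝ)*(c:ℝ)*(∑ k : Fin m, |ν k|)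
            + ((∑ k : Fin m, (g k.succ:ℝ) * (ε k:ℝ) * (qr k:ℝ))
               - (g 0:ℝ)*(c:ℝ)*(∑ k : Fin m, (ε k:ℝ) * (qr k:ℝ))) := by
        rw [Finset.mul_sum, Finset.mul_sum, ← Finset.sum_sub_distrib, ← Finset.sum_sub_distrib,
          ← Finset.sum_add_distrib]
        refine Finset.sum_congr rfl fun k _ => ?_
        have hk := habs k
        linear_combination ((g k.succ:ℝ) - (g 0:ℝ)*(c:ℝ)) * hk
      rw [Fin.sum_univ_succ]
      simp only [hhdef, Fin.cases_zero, Fin.cases_succ, Rat.smul_def, hμ0, mul_one]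
      push_cast
      rw [e1]
      linear_combination hg'
    have hz := Fintype.linearIndependent_iff.mp hμli h hsum
    have hg0 : g 0 = 0 := by
      have h00 := hz 0
      have hks : ∀ k : Fin m, g k.succ = g 0 * c := by
        intro k
        have := hz k.succ
        simp only [hhdef, Fin.cases_succ] at this
        rcases mul_eq_zero.mp this with h' | h'
        · exact absurd h' (hεne k)
        · linarith [sub_eq_zero.mp h']
      simp only [hhdef, Fin.cases_zero] at h00
      have hsimp : ∑ k : Fin m, g k.succ * ε k * qr k
          = g 0 * (c:ℚ) * ∑ k : Fin m, ε k * qr k := by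
        rw [Finset.mul_sum]
        refine Finset.sum_congr rfl fun k _ => ?_
        rw [hks k]; ring
      rw [hsimp] at h00
      have : g 0 * (1 + (c:ℚ) * ∑ k : Fin m, ε k * qr k)
          - g 0 * (c:ℚ) * ∑ k : Fin m, ε k * qr k = g 0 := by ring
      rw [this] at h00
      exact h00
    intro i
    refine Fin.cases ?_ ?_ i
    · exact hg0
    · intro k
      have := hz k.succ
      simp only [hhdef, Fin.cases_succ] at this
      rcases mul_eq_zero.mp this with h' | h'
      · exact absurd h' (hεne k)
      · have := sub_eq_zero.mp h'
        rw [hg0] at this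
        simpa using this
  · -- properties of T
    intro i
    refine Fin.cases ?_ ?_ i
    · refine ⟨hAsymm, hApos, fun a b => ⟨_, hArat a b⟩⟩
    · intro k
      have hTk := hTs k
      have hsymm : (T k.succ).IsSymm := by
        rw [hTk]
        exact ((hAsymm.smul (c:ℝ)).add ((hFsymm k.succ).smul (ε k : ℝ)))
      refine ⟨hsymm, ?_, ?_⟩
      · refine posDef_of_symm_quad hsymm fun x hx => ?_
        rw [hTk, quad_add, quad_smul, quad_smul]
        have h1 := hAquad x
        have h2 := hFb k.succ x
        have hpos := sum_sq_pos_of_ne_zero hx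
        have hεb : -(C * ∑ a, x a ^ 2) ≤ (ε k:ℝ) * (x ⬝ᵥ F k.succ *ᵥ x) := by
          have habs2 : |(ε k:ℝ) * (x ⬝ᵥ F k.succ *ᵥ x)| = |x ⬝ᵥ F k.succ *ᵥ x| := by
            rw [abs_mul]
            rw [hεabs1 k, one_mul]
          linarith [neg_abs_le ((ε k:ℝ) * (x ⬝ᵥ F k.succ *ᵥ x)), habs2.le,
            abs_le.mp (le_refl |x ⬝ᵥ F k.succ *ᵥ x|) ]
        have h3 : (c:ℝ) * ((γ/2) * ∑ a, x a ^ 2) ≤ (c:ℝ) * (x ⬝ᵥ A *ᵥ x) :=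
          mul_le_mul_of_nonneg_left h1 (le_of_lt hcpos)
        nlinarith
      · intro a b
        refine ⟨(c:ℚ) * (q a b 0 + ∑ j : Fin m, qr j * q a b j.succ) + ε k * q a b k.succ, ?_⟩
        rw [hTk]
        simp only [Matrix.add_apply, Matrix.smul_apply, smul_eq_mul]
        rw [hArat a b, hFapp]
        push_cast
        ring
  · -- the sum identity
    rw [Fin.sum_univ_succ]
    simp only [hlam0, hlams, hT0, hTs]
    have h1 : ∀ k : Fin m, |ν k| • ((c:ℝ) • A + (ε k:ℝ) • F k.succ)
        = ((c:ℝ) * |ν k|) • A + ν k • F k.succ := by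
      intro k
      rw [smul_add, smul_smul, smul_smul]
      congr 1
      · rw [mul_comm]
      · congr 1
        rw [hεabs k, mul_comm ((ε k:ℝ)) (ν k), mul_assoc, hε2 k, mul_one]
    rw [Finset.sum_congr rfl fun k _ => h1 k, Finset.sum_add_distrib, ← Finset.sum_smul,
      ← add_assoc, ← add_smul]
    have h2 : (1 - (c:ℝ) * ∑ k : Fin m, |ν k|) + ∑ k : Fin m, (c:ℝ) * |ν k| = 1 := by
      rw [← Finset.mul_sum]; ring
    rw [h2, one_smul]
    exact hkey
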